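/- For every natural number b ≥ 1 there exists a nonzero rational constant c, depending only on b, such that for every rational number a with (2a)_b ≠ 0: P_|(a − 1/2, b+1) = c · P_−(a, b). -/

import Mathlib

open Polynomial Finset

/-- Proctor's formula `P_|(a,b)` for vertically symmetric lozenge tilings of `H_{2a,b,b}`:
`P_|(a,b) = ((a+1)_{b-1}/(2a+1)_{b-1}) · ∏_{1≤i≤j≤b-1} (2a+i+j-1)/(i+j-1)`. -/
noncomputable def Pvert (a : ℚ) (b : ℕ) : ℚ :=
  ((ascPochhammer ℚ (b - 1)).eval (a + 1) / (ascPochhammer ℚ (b - 1)).eval (2 * a + 1)) *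
    ∏ j ∈ Finset.Icc 1 (b - 1), ∏ i ∈ Finset.Icc 1 j,
      (2 * a + (i : ℚ) + (j : ℚ) - 1) / ((i : ℚ) + (j : ℚ) - 1)

/-- The formula `P_-(a,b)` for horizontally symmetric lozenge tilings of `H_{2a,b,b}`:
`P_-(a,b) = ((2a+1)_b/b!) · ∏_{1≤i<j≤b} (2a+i+j)/(i+j)`. -/
noncomputable def Phoriz (a : ℚ) (b : ℕ) : ℚ :=
  ((ascPochhammer ℚ b).eval (2 * a + 1) / (b.factorial : ℚ)) *
    ∏ j ∈ Finset.Icc 1 b, ∏ i ∈ Finset.Ico 1 j, (2 * a + (i : ℚ) + (j : ℚ)) / ((i : ℚ) + (j : ℚ))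

/-- for every `b ≥ 1` there is a nonzero rational constant `c`, depending
only on `b`, with `P_|(a - 1/2, b+1) = c · P_-(a, b)` for every rational `a` such that
`(2a)_b ≠ 0`. -/

lemma asc_eval (n : ℕ) (x : ℚ) :
    (ascPochhammer ℚ n).eval x = ∏ i ∈ range n, (x + i) := by
  induction n with
  | zero => simp
  | succ n ih =>
    rw [ascPochhammer_succ_right, prod_range_succ, ← ih]
    simp [eval_mul]

lemma even_odd (f : ℕ → ℚ) (n : ℕ) :
    ∏ t ∈ range (2 * n), f t = (∏ j ∈ range n, f (2 * j)) * ∏ j ∈ range n, f (2 * j + 1) := by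
  induction n with
  | zero => simp
  | succ n ih =>
    have : 2 * (n + 1) = 2 * n + 1 + 1 := by ring
    rw [this, prod_range_succ, prod_range_succ, prod_range_succ, prod_range_succ, ih]
    ring

lemma key (m : ℕ) (a : ℚ) :
    (2:ℚ)^(m+1) * (∏ k ∈ range (m+1), (a + 1/2 + (k:ℚ))) *
      ∏ j ∈ range (m+1), ∏ i ∈ range (j+1), (2*a + (i:ℚ) + (j:ℚ)) =
    (∏ t ∈ range (m+1), (2*a + (t:ℚ))) * (∏ t ∈ range (m+1), (2*a + 1 + (t:ℚ))) *
      ∏ j ∈ range (m+1), ∏ i ∈ range j, (2*a + (i:ℚ) + (j:ℚ) + 2) := by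
  set h : ℕ → ℚ := fun t => 2*a + (t:ℚ) with hh
  -- Step A: 2^(m+1) * odd-half
  have stepA : (2:ℚ)^(m+1) * (∏ k ∈ range (m+1), (a + 1/2 + (k:ℚ)))
      = ∏ k ∈ range (m+1), h (2*k+1) := by
    have h2 : (2:ℚ)^(m+1) = ∏ _k ∈ range (m+1), (2:ℚ) := by simp
    rw [h2, ← Finset.prod_mul_distrib]
    refine Finset.prod_congr rfl fun k _ => ?_
    simp only [hh]; push_cast; ring
  -- Step B: diagonal split of N1
  have stepB : (∏ j ∈ range (m+1), ∏ i ∈ range (j+1), (2*a + (i:ℚ) + (j:ℚ)))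
      = (∏ j ∈ range (m+1), h (2*j)) *
        ∏ j ∈ range (m+1), ∏ i ∈ range j, (2*a + (i:ℚ) + (j:ℚ)) := by
    rw [← Finset.prod_mul_distrib]
    refine Finset.prod_congr rfl fun j _ => ?_
    rw [prod_range_succ]
    simp only [hh]; push_cast; ring
  -- Step C: even/odd merge
  have stepC : (∏ k ∈ range (m+1), h (2*k+1)) * (∏ j ∈ range (m+1), h (2*j))
      = (∏ t ∈ range (m+1), h t) * ∏ t ∈ range (m+1), h (m+1+t) := by
    rw [mul_comm, ← even_odd h (m+1), two_mul, prod_range_add]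
  -- Step D: strip i = 0 column from the strict part
  have stepD : (∏ j ∈ range (m+1), ∏ i ∈ range j, (2*a + (i:ℚ) + (j:ℚ)))
      = (∏ j ∈ range m, h (j+1)) *
        ∏ j ∈ range m, ∏ i ∈ range j, (2*a + (i:ℚ) + (j:ℚ) + 2) := by
    rw [prod_range_succ']
    simp only [range_zero, prod_empty, mul_one]
    rw [← Finset.prod_mul_distrib]
    refine Finset.prod_congr rfl fun j _ => ?_
    rw [prod_range_succ']
    rw [mul_comm]
    congr 1
    · simp only [hh]; push_cast; ring
    · refine Finset.prod_congr rfl fun i _ => ?_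
      push_cast; ring
  -- Step E: strip j = m row from N2
  have stepE : (∏ j ∈ range (m+1), ∏ i ∈ range j, (2*a + (i:ℚ) + (j:ℚ) + 2))
      = (∏ j ∈ range m, ∏ i ∈ range j, (2*a + (i:ℚ) + (j:ℚ) + 2)) *
        ∏ i ∈ range m, h (m+2+i) := by
    rw [prod_range_succ]
    congr 1
    refine Finset.prod_congr rfl fun i _ => ?_
    simp only [hh]; push_cast; ring
  -- Step F: the two boundary products match
  have stepF1 : (∏ t ∈ range (m+1), h (m+1+t))
      = h (m+1) * ∏ i ∈ range m, h (m+2+i) := by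
    rw [prod_range_succ']
    rw [mul_comm, show m+1+0 = m+1 from rfl]
    congr 1
    exact Finset.prod_congr rfl fun i _ => by
      rw [show m+1+(i+1) = m+2+i from by omega]
  have stepF2 : (∏ t ∈ range (m+1), (2*a + 1 + (t:ℚ)))
      = (∏ j ∈ range m, h (j+1)) * h (m+1) := by
    rw [prod_range_succ]
    congr 1
    · refine Finset.prod_congr rfl fun j _ => ?_
      simp only [hh]; push_cast; ring
    · simp only [hh]; push_cast; ring
  have hQ : (∏ t ∈ range (m+1), (2*a + (t:ℚ))) = ∏ t ∈ range (m+1), h t := rfl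
  rw [stepB, stepD, stepE, stepF2, hQ]
  linear_combination
    (∏ j ∈ range (m+1), h (2*j)) * (∏ j ∈ range m, h (j+1)) *
      (∏ j ∈ range m, ∏ i ∈ range j, (2*a + (i:ℚ) + (j:ℚ) + 2)) * stepA +
    (∏ j ∈ range m, h (j+1)) *
      (∏ j ∈ range m, ∏ i ∈ range j, (2*a + (i:ℚ) + (j:ℚ) + 2)) * stepC +
    (∏ t ∈ range (m+1), h t) * (∏ j ∈ range m, h (j+1)) *
      (∏ j ∈ range m, ∏ i ∈ range j, (2*a + (i:ℚ) + (j:ℚ) + 2)) * stepF1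

lemma conv1 (b : ℕ) (f : ℕ → ℕ → ℚ) :
    ∏ j ∈ Icc 1 b, ∏ i ∈ Icc 1 j, f i j
      = ∏ j ∈ range b, ∏ i ∈ range (j+1), f (i+1) (j+1) := by
  rw [← Finset.Ico_add_one_right_eq_Icc, prod_Ico_eq_prod_range, show b + 1 - 1 = b from rfl]
  refine prod_congr rfl fun j _ => ?_
  rw [← Finset.Ico_add_one_right_eq_Icc, prod_Ico_eq_prod_range,
    show 1 + j + 1 - 1 = j + 1 from by omega]
  exact prod_congr rfl fun i _ => by rw [Nat.add_comm 1 i, Nat.add_comm 1 j]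

lemma conv2 (b : ℕ) (f : ℕ → ℕ → ℚ) :
    ∏ j ∈ Icc 1 b, ∏ i ∈ Ico 1 j, f i j
      = ∏ j ∈ range b, ∏ i ∈ range j, f (i+1) (j+1) := by
  rw [← Finset.Ico_add_one_right_eq_Icc, prod_Ico_eq_prod_range, show b + 1 - 1 = b from rfl]
  refine prod_congr rfl fun j _ => ?_
  rw [prod_Ico_eq_prod_range, show 1 + j - 1 = j from by omega]
  exact prod_congr rfl fun i _ => by rw [Nat.add_comm 1 i, Nat.add_comm 1 j]

lemma quot_split (b : ℕ) (F G : ℕ → ℕ → ℚ) :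
    ∏ j ∈ Icc 1 b, ∏ i ∈ Icc 1 j, (F i j / G i j)
      = (∏ j ∈ Icc 1 b, ∏ i ∈ Icc 1 j, F i j) / ∏ j ∈ Icc 1 b, ∏ i ∈ Icc 1 j, G i j := by
  rw [← prod_div_distrib]
  exact prod_congr rfl fun j _ => prod_div_distrib _ _

lemma quot_split' (b : ℕ) (F G : ℕ → ℕ → ℚ) :
    ∏ j ∈ Icc 1 b, ∏ i ∈ Ico 1 j, (F i j / G i j)
      = (∏ j ∈ Icc 1 b, ∏ i ∈ Ico 1 j, F i j) / ∏ j ∈ Icc 1 b, ∏ i ∈ Ico 1 j, G i j := by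
  rw [← prod_div_distrib]
  exact prod_congr rfl fun j _ => prod_div_distrib _ _

theorem Pvert_shift_eq_const_mul_Phoriz (b : ℕ) (hb : 1 ≤ b) :
    ∃ c : ℚ, c ≠ 0 ∧ ∀ a : ℚ, (ascPochhammer ℚ b).eval (2 * a) ≠ 0 →
      Pvert (a - 1 / 2) (b + 1) = c * Phoriz a b := by
  obtain ⟨m, rfl⟩ : ∃ m, b = m + 1 := ⟨b - 1, by omega⟩
  have hD1 : (∏ j ∈ Icc 1 (m+1), ∏ i ∈ Icc 1 j, ((i:ℚ) + (j:ℚ) - 1)) ≠ 0 := by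
    refine ne_of_gt (prod_pos fun j hj => prod_pos fun i hi => ?_)
    have h1 : (1:ℚ) ≤ i := by exact_mod_cast (mem_Icc.mp hi).1
    have h2 : (1:ℚ) ≤ j := by exact_mod_cast (mem_Icc.mp hj).1
    linarith
  have hD2 : (∏ j ∈ Icc 1 (m+1), ∏ i ∈ Ico 1 j, ((i:ℚ) + (j:ℚ))) ≠ 0 := by
    refine ne_of_gt (prod_pos fun j hj => prod_pos fun i hi => ?_)
    have h1 : (1:ℚ) ≤ i := by exact_mod_cast (mem_Ico.mp hi).1
    have h2 : (1:ℚ) ≤ j := by exact_mod_cast (mem_Icc.mp hj).1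
    linarith
  have hfac : ((m+1).factorial : ℚ) ≠ 0 := by
    exact_mod_cast (m+1).factorial_ne_zero
  have hpow : ((2:ℚ)^(m+1)) ≠ 0 := by positivity
  refine ⟨(((m+1).factorial : ℚ) * ∏ j ∈ Icc 1 (m+1), ∏ i ∈ Ico 1 j, ((i:ℚ) + (j:ℚ))) /
      ((2:ℚ)^(m+1) * ∏ j ∈ Icc 1 (m+1), ∏ i ∈ Icc 1 j, ((i:ℚ) + (j:ℚ) - 1)),
    div_ne_zero (mul_ne_zero hfac hD2) (mul_ne_zero hpow hD1), fun a hQ => ?_⟩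
  rw [asc_eval] at hQ
  -- rewrite Pvert
  have hPv : Pvert (a - 1/2) (m+1+1)
      = ((∏ k ∈ range (m+1), (a + 1/2 + (k:ℚ))) / ∏ k ∈ range (m+1), (2*a + (k:ℚ))) *
        ((∏ j ∈ range (m+1), ∏ i ∈ range (j+1), (2*a + (i:ℚ) + (j:ℚ))) /
          ∏ j ∈ Icc 1 (m+1), ∏ i ∈ Icc 1 j, ((i:ℚ) + (j:ℚ) - 1)) := by
    simp only [Pvert, Nat.add_sub_cancel]
    rw [show a - 1/2 + 1 = a + 1/2 from by ring, show 2*(a - 1/2) + 1 = 2*a from by ring,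
      asc_eval, asc_eval]
    congr 1
    rw [quot_split (m+1) (fun i j => 2*(a - 1/2) + (i:ℚ) + (j:ℚ) - 1) (fun i j => (i:ℚ) + (j:ℚ) - 1)]
    congr 1
    rw [conv1 (m+1) (fun i j => 2*(a - 1/2) + (i:ℚ) + (j:ℚ) - 1)]
    refine prod_congr rfl fun j _ => prod_congr rfl fun i _ => ?_
    push_cast; ring
  have hPh : Phoriz a (m+1)
      = ((∏ k ∈ range (m+1), (2*a + 1 + (k:ℚ))) / ((m+1).factorial : ℚ)) *
        ((∏ j ∈ range (m+1), ∏ i ∈ range j, (2*a + (i:ℚ) + (j:ℚ) + 2)) /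
          ∏ j ∈ Icc 1 (m+1), ∏ i ∈ Ico 1 j, ((i:ℚ) + (j:ℚ))) := by
    simp only [Phoriz]
    rw [asc_eval]
    congr 1
    rw [quot_split' (m+1) (fun i j => 2*a + (i:ℚ) + (j:ℚ)) (fun i j => (i:ℚ) + (j:ℚ))]
    congr 1
    rw [conv2 (m+1) (fun i j => 2*a + (i:ℚ) + (j:ℚ))]
    refine prod_congr rfl fun j _ => prod_congr rfl fun i _ => ?_
    push_cast; ring
  rw [hPv, hPh]
  have hk := key m a
  rw [div_mul_div_comm, div_mul_div_comm, div_mul_div_comm,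
    div_eq_div_iff (mul_ne_zero hQ hD1)
      (mul_ne_zero (mul_ne_zero hpow hD1) (mul_ne_zero hfac hD2))]
  linear_combination ((∏ j ∈ Icc 1 (m+1), ∏ i ∈ Icc 1 j, ((i:ℚ) + (j:ℚ) - 1)) *
    ((m+1).factorial : ℚ) * (∏ j ∈ Icc 1 (m+1), ∏ i ∈ Ico 1 j, ((i:ℚ) + (j:ℚ)))) * hk
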